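/- arXiv:2002.03486 — 5 statements merged into one kernel-verified Lean document; each statement's English description precedes it below -/
import Mathlib

section
/- Let ν be a group whose abelianization is infinite cyclic, and let κ ≅ ℤ be a central subgroup of ν such that the quotient G = ν/κ is normally generated by a single element (has weight 1). If the abelianization of G is cyclic of order e with e ∈ {0,1,2,3,4,6}, then ν is normally generated by a single element (has weight 1). -/
/-- A group has weight 1 if it is the normal closure of a single element. -/
def HasWeightOne (G : Type*) [Group G] : Prop :=
  ∃ g : G, Subgroup.normalClosure {g} = ⊤

/-- In `ZMod e` for `e ∈ {0,1,2,3,4,6}`, the only units are `±1`. -/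
lemma zmod_unit_pm_one (e : ℕ) (he : e ∈ ({0, 1, 2, 3, 4, 6} : Set ℕ))
    (z : ZMod e) (hz : IsUnit z) : z = 1 ∨ z = -1 := by
  simp only [Set.mem_insert_iff, Set.mem_singleton_iff] at he
  rcases he with rfl | rfl | rfl | rfl | rfl | rfl
  · exact Int.isUnit_iff.mp hz
  all_goals revert hz; revert z; decide

theorem stmt0 (ν : Type*) [Group ν]
    (hab : Nonempty (Abelianization ν ≃* Multiplicative ℤ))
    (κ : Subgroup ν) (hcentral : κ ≤ Subgroup.center ν) [κ.Normal]
    (hκ : Nonempty (κ ≃* Multiplicative ℤ))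
    (hG : HasWeightOne (ν ⧸ κ))
    (e : ℕ) (he : e ∈ ({0, 1, 2, 3, 4, 6} : Set ℕ))
    (hGab : Nonempty (Abelianization (ν ⧸ κ) ≃* Multiplicative (ZMod e))) :
    HasWeightOne ν := by
  obtain ⟨φ⟩ := hab
  obtain ⟨ψ⟩ := hGab
  obtain ⟨g, hg⟩ := hG
  obtain ⟨x, hx⟩ := QuotientGroup.mk'_surjective κ g
  -- the abelianization map of ν, as a map to Multiplicative ℤ
  set f : ν →* Multiplicative ℤ := φ.toMonoidHom.comp Abelianization.of with hf_def
  have hofsurj : Function.Surjective (Abelianization.of : ν →* Abelianization ν) :=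
    fun y => QuotientGroup.mk_surjective y
  have hfsurj : Function.Surjective f := φ.surjective.comp hofsurj
  have hker : ∀ v : ν, f v = 1 ↔ v ∈ commutator ν := by
    intro v
    have h1 : f v = 1 ↔ Abelianization.of v = 1 := by
      rw [show f v = φ (Abelianization.of v) from rfl, φ.map_eq_one_iff]
    rw [h1]
    exact QuotientGroup.eq_one_iff v
  -- the abelianization map of ν⧸κ
  set p : (ν ⧸ κ) →* Multiplicative (ZMod e) := ψ.toMonoidHom.comp Abelianization.of with hp_def
  have hpsurj : Function.Surjective p :=
    ψ.surjective.comp (fun y => QuotientGroup.mk_surjective y)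
  set P : ν →* Multiplicative (ZMod e) := p.comp (QuotientGroup.mk' κ) with hP_def
  have hPsurj : Function.Surjective P := hpsurj.comp (QuotientGroup.mk'_surjective κ)
  -- P factors through f
  set Pbar : Multiplicative ℤ →* Multiplicative (ZMod e) :=
    (Abelianization.lift P).comp φ.symm.toMonoidHom with hPbar_def
  have hPb : ∀ v : ν, Pbar (f v) = P v := by
    intro v
    show Abelianization.lift P (φ.symm (φ (Abelianization.of v))) = P v
    rw [φ.symm_apply_apply]
    exact Abelianization.lift_apply_of P v
  -- Pbar is "multiplication by c"
  set c : ZMod e := Multiplicative.toAdd (Pbar (Multiplicative.ofAdd (1 : ℤ))) with hc_def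
  have hPbc : ∀ z : ℤ, Pbar (Multiplicative.ofAdd z) = Multiplicative.ofAdd ((z : ZMod e) * c) := by
    intro z
    have h1 : Multiplicative.ofAdd z = (Multiplicative.ofAdd (1 : ℤ)) ^ z := by
      rw [← ofAdd_zsmul]; norm_num
    rw [h1, map_zpow]
    have h2 : Pbar (Multiplicative.ofAdd (1 : ℤ)) = Multiplicative.ofAdd c := rfl
    rw [h2, ← ofAdd_zsmul]
    congr 1
    rw [zsmul_eq_mul]
  -- c is a unit
  have hcunit : IsUnit c := by
    obtain ⟨v, hv⟩ := hPsurj (Multiplicative.ofAdd (1 : ZMod e))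
    rw [← hPb] at hv
    have := hPbc (Multiplicative.toAdd (f v))
    rw [ofAdd_toAdd, hv] at this
    have h2 : ((Multiplicative.toAdd (f v) : ℤ) : ZMod e) * c = 1 :=
      Multiplicative.ofAdd.injective this.symm
    exact IsUnit.of_mul_eq_one _ (by rw [mul_comm]; exact h2)
  -- the image of x generates the abelian quotient `Multiplicative (ZMod e)`
  set a : ℤ := Multiplicative.toAdd (f x) with ha_def
  have hfa : f x = Multiplicative.ofAdd a := rfl
  have hPx : P x = Multiplicative.ofAdd ((a : ZMod e) * c) := by
    rw [← hPb, hfa, hPbc]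
  have hzpow : Subgroup.zpowers (P x) = ⊤ := by
    have hxg : P x = p g := by rw [hP_def]; simp [MonoidHom.comp_apply, hx]
    rw [hxg]
    have h1 : Subgroup.normalClosure {g} ≤ Subgroup.comap p (Subgroup.zpowers (p g)) := by
      apply Subgroup.normalClosure_le_normal
      intro y hy
      rw [Set.mem_singleton_iff] at hy
      subst hy
      exact Subgroup.mem_comap.mpr (Subgroup.mem_zpowers _)
    rw [hg] at h1
    rw [eq_top_iff]
    intro w _
    obtain ⟨v, rfl⟩ := hpsurj w
    exact Subgroup.mem_comap.mp (h1 (Subgroup.mem_top v))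
  -- hence (a : ZMod e) is a unit
  have haunit : IsUnit ((a : ZMod e)) := by
    have h1 : (Multiplicative.ofAdd (1 : ZMod e)) ∈ Subgroup.zpowers (P x) := by
      rw [hzpow]; exact Subgroup.mem_top _
    obtain ⟨z, hz⟩ := h1
    have hz' : Multiplicative.ofAdd ((a : ZMod e) * c) ^ z = Multiplicative.ofAdd (1 : ZMod e) := by
      rw [← hPx]; exact hz
    rw [← ofAdd_zsmul] at hz'
    have h2 : (z : ZMod e) * ((a : ZMod e) * c) = 1 := by
      have := Multiplicative.ofAdd.injective hz'
      rwa [zsmul_eq_mul] at this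
    exact isUnit_of_mul_isUnit_left (IsUnit.of_mul_eq_one _ (by rw [mul_comm]; exact h2))
  -- so a ≡ ±1 mod e
  obtain ⟨ε, hε, hεa⟩ : ∃ ε : ℤ, (ε = 1 ∨ ε = -1) ∧ ((a : ZMod e) = (ε : ZMod e)) := by
    rcases zmod_unit_pm_one e he _ haunit with h | h
    · exact ⟨1, Or.inl rfl, by rw [h]; norm_num⟩
    · exact ⟨-1, Or.inr rfl, by rw [h]; push_cast; ring⟩
  have hdvd : (e : ℤ) ∣ ε - a := by
    rw [← ZMod.intCast_zmod_eq_zero_iff_dvd]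
    push_cast
    rw [← hεa]
    ring
  -- elements killed by Pbar are in the image of κ under f
  have hKmem : ∀ y : Multiplicative ℤ, Pbar y = 1 → ∃ k ∈ κ, f k = y := by
    intro y hy
    obtain ⟨v, rfl⟩ := hfsurj y
    have hvP : P v = 1 := by rw [← hPb]; exact hy
    have h2 : (QuotientGroup.mk' κ) v ∈ commutator (ν ⧸ κ) := by
      have h1 : ψ (Abelianization.of ((QuotientGroup.mk' κ) v)) = 1 := hvP
      rw [ψ.map_eq_one_iff] at h1
      exact (QuotientGroup.eq_one_iff _).mp h1
    have h3 : commutator (ν ⧸ κ) = Subgroup.map (QuotientGroup.mk' κ) (commutator ν) := by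
      rw [commutator_def, commutator_def, Subgroup.map_commutator,
        Subgroup.map_top_of_surjective _ (QuotientGroup.mk'_surjective κ)]
    rw [h3] at h2
    have h4 : v ∈ commutator ν ⊔ κ := by
      have h5 : v ∈ Subgroup.comap (QuotientGroup.mk' κ)
          (Subgroup.map (QuotientGroup.mk' κ) (commutator ν)) := Subgroup.mem_comap.mpr h2
      rwa [Subgroup.comap_map_eq, QuotientGroup.ker_mk'] at h5
    rw [← SetLike.mem_coe, Subgroup.normal_mul] at h4
    obtain ⟨w, hw, k, hk, rfl⟩ := h4
    exact ⟨k, hk, by rw [map_mul, (hker w).mpr hw, one_mul]⟩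
  -- adjust x by a central element k so that f (x*k) = ofAdd ε
  obtain ⟨k, hkκ, hfk⟩ : ∃ k ∈ κ, f k = Multiplicative.ofAdd (ε - a) := by
    apply hKmem
    rw [hPbc]
    have : ((ε - a : ℤ) : ZMod e) = 0 := by
      rw [ZMod.intCast_zmod_eq_zero_iff_dvd]
      exact hdvd
    rw [this, zero_mul]
    rfl
  set x' : ν := x * k with hx'_def
  have hfx' : f x' = Multiplicative.ofAdd ε := by
    rw [hx'_def, map_mul, hfa, hfk, ← ofAdd_add]
    congr 1
    ring
  have hmkx' : (QuotientGroup.mk' κ) x' = g := by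
    rw [hx'_def, map_mul, hx]
    have : (QuotientGroup.mk' κ) k = 1 := (QuotientGroup.eq_one_iff k).mpr hkκ
    rw [this, mul_one]
  -- N := normal closure of x'
  set N : Subgroup ν := Subgroup.normalClosure {x'} with hN_def
  have hx'N : x' ∈ N := Subgroup.subset_normalClosure rfl
  haveI hNnormal : N.Normal := Subgroup.normalClosure_normal
  -- every element of ν is (elt of N) * (elt of κ)
  have hdec : ∀ v : ν, ∃ n ∈ N, ∃ kk ∈ κ, v = n * kk := by
    intro v
    haveI : (Subgroup.map (QuotientGroup.mk' κ) N).Normal :=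
      hNnormal.map _ (QuotientGroup.mk'_surjective κ)
    have h1 : (QuotientGroup.mk' κ) v ∈ Subgroup.map (QuotientGroup.mk' κ) N := by
      have h2 : Subgroup.normalClosure {g} ≤ Subgroup.map (QuotientGroup.mk' κ) N := by
        apply Subgroup.normalClosure_le_normal
        intro y hy
        rw [Set.mem_singleton_iff] at hy
        subst hy
        exact ⟨x', hx'N, hmkx'⟩
      rw [hg] at h2
      exact h2 (Subgroup.mem_top _)
    obtain ⟨n, hn, hmkn⟩ := h1
    refine ⟨n, hn, n⁻¹ * v, ?_, by group⟩
    have : (QuotientGroup.mk' κ) (n⁻¹ * v) = 1 := by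
      rw [map_mul, map_inv, hmkn]
      group
    exact (QuotientGroup.eq_one_iff _).mp this
  -- the commutator subgroup is contained in N
  have hcommN : commutator ν ≤ N := by
    rw [commutator_def, Subgroup.commutator_le]
    intro v _ w _
    obtain ⟨n, hn, kk, hkk, rfl⟩ := hdec v
    have hkkc : ∀ g : ν, g * kk = kk * g := Subgroup.mem_center_iff.mp (hcentral hkk)
    have h1 : kk * w * kk⁻¹ = w := by
      rw [← hkkc w, mul_assoc, mul_inv_cancel, mul_one]
    open scoped commutatorElement in
    have h2 : ⁅n * kk, w⁆ = ⁅n, w⁆ := by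
      calc ⁅n * kk, w⁆ = n * (kk * w * kk⁻¹) * n⁻¹ * w⁻¹ := by
            rw [commutatorElement_def]; group
        _ = n * w * n⁻¹ * w⁻¹ := by rw [h1]
        _ = ⁅n, w⁆ := (commutatorElement_def n w).symm
    rw [h2]
    have h3 : w * n⁻¹ * w⁻¹ ∈ N := hNnormal.conj_mem _ (N.inv_mem hn) w
    open scoped commutatorElement in
    have h4 : ⁅n, w⁆ = n * (w * n⁻¹ * w⁻¹) := by rw [commutatorElement_def]; group
    rw [h4]
    exact N.mul_mem hn h3
  -- finish: N = ⊤
  refine ⟨x', ?_⟩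
  rw [← hN_def, eq_top_iff]
  intro v _
  set m : ℤ := Multiplicative.toAdd (f v) with hm_def
  have hfv : f v = Multiplicative.ofAdd m := rfl
  have hεsq : ε * ε = 1 := by rcases hε with rfl | rfl <;> norm_num
  have hpow : f (x' ^ (m * ε)) = f v := by
    rw [map_zpow, hfx', ← ofAdd_zsmul, hfv]
    congr 1
    rw [zsmul_eq_mul]
    push_cast
    calc (m * ε) * ε = m * (ε * ε) := by ring
      _ = m := by rw [hεsq, mul_one]
  have hmem1 : v * (x' ^ (m * ε))⁻¹ ∈ commutator ν := by
    rw [← hker]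
    rw [map_mul, map_inv, hpow]
    group
  have hmem2 : x' ^ (m * ε) ∈ N := N.zpow_mem hx'N _
  have : v = (v * (x' ^ (m * ε))⁻¹) * x' ^ (m * ε) := by group
  rw [this]
  exact N.mul_mem (hcommN hmem1) hmem2
end

section
/- Let E be a group extension of G by a normal subgroup S that is abelian (or more generally solvable), such that the induced map on abelianizations E/[E,E] → G/[G,G] is an isomorphism. If G has weight 1, then E has weight 1. -/
theorem stmt2 (E G : Type*) [Group E] [Group G] (φ : E →* G)
    (hsurj : Function.Surjective φ) (hsolv : IsSolvable φ.ker)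
    (hab : Function.Bijective
      (Abelianization.lift ((Abelianization.of : G →* Abelianization G).comp φ) :
        Abelianization E →* Abelianization G))
    (hG : HasWeightOne G) :
    HasWeightOne E := by
  obtain ⟨g, hg⟩ := hG
  obtain ⟨e, he⟩ := hsurj g
  refine ⟨e, ?_⟩
  set N := Subgroup.normalClosure {e} with hN
  set ψ : Abelianization E →* Abelianization G :=
    Abelianization.lift ((Abelianization.of : G →* Abelianization G).comp φ) with hψ
  have hofE : Function.Surjective (Abelianization.of : E → Abelianization E) := fun x =>
    Quotient.inductionOn' x fun a => ⟨a, rfl⟩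
  have hofG : Function.Surjective (Abelianization.of : G → Abelianization G) := fun x =>
    Quotient.inductionOn' x fun a => ⟨a, rfl⟩
  have hψe : ψ (Abelianization.of e) = Abelianization.of g := by
    simp [hψ, he]
  -- Ab(G) is generated by of g
  have hAbG : Subgroup.zpowers (Abelianization.of g) = (⊤ : Subgroup (Abelianization G)) := by
    have h1 : Subgroup.map (Abelianization.of : G →* Abelianization G)
        (Subgroup.normalClosure {g}) = Subgroup.normalClosure {Abelianization.of g} := by
      rw [Subgroup.map_normalClosure _ _ hofG, Set.image_singleton]
    rw [hg, Subgroup.map_top_of_surjective _ hofG] at h1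
    have h2 : Subgroup.normalClosure {Abelianization.of g} ≤
        Subgroup.zpowers (Abelianization.of g) := by
      apply Subgroup.normalClosure_le_normal
      simp [Subgroup.mem_zpowers]
    rw [← h1] at h2
    exact le_antisymm le_top h2
  -- every element of Ab(E) is a power of of e
  have hAbE : ∀ x : Abelianization E, ∃ n : ℤ, x = (Abelianization.of e) ^ n := by
    intro x
    have : ψ x ∈ Subgroup.zpowers (Abelianization.of g) := by rw [hAbG]; trivial
    obtain ⟨n, hn⟩ := Subgroup.mem_zpowers_iff.mp this
    refine ⟨n, hab.1 ?_⟩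
    rw [map_zpow, hψe, hn]
  -- decompose elements of E
  have hdec : ∀ x : E, ∃ n : ℤ, x * e ^ (-n) ∈ commutator E := by
    intro x
    obtain ⟨n, hn⟩ := hAbE (Abelianization.of x)
    refine ⟨n, ?_⟩
    have : Abelianization.of (x * e ^ (-n)) = 1 := by
      rw [map_mul, map_zpow, zpow_neg, ← hn, mul_inv_cancel]
    exact (QuotientGroup.eq_one_iff _).mp this
  -- quotient by N
  have hNe : e ∈ N := Subgroup.subset_normalClosure rfl
  set π : E →* E ⧸ N := QuotientGroup.mk' N with hπ
  have hπsurj : Function.Surjective π := QuotientGroup.mk'_surjective N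
  -- E ⧸ N is solvable: it is a quotient of the kernel
  have hmapN : N.map φ = ⊤ := by
    rw [hN, Subgroup.map_normalClosure _ _ hsurj, Set.image_singleton, he, hg]
  have hker : Function.Surjective (π.comp φ.ker.subtype) := by
    intro q
    obtain ⟨x, hx⟩ := hπsurj q
    have : φ x ∈ N.map φ := by rw [hmapN]; trivial
    obtain ⟨n, hnN, hn⟩ := this
    refine ⟨⟨x * n⁻¹, ?_⟩, ?_⟩
    · simp [MonoidHom.mem_ker, hn]
    · simp only [MonoidHom.comp_apply, Subgroup.coe_subtype]
      rw [← hx]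
      apply (QuotientGroup.mk'_eq_mk' N).mpr
      exact ⟨n, hnN, by group⟩
  have hsolvQ : IsSolvable (E ⧸ N) := by haveI : Group.IsSolvable φ.ker := hsolv; exact solvable_of_surjective hker
  -- E ⧸ N is perfect
  have hperf : commutator (E ⧸ N) = ⊤ := by
    rw [eq_top_iff]
    rintro q -
    obtain ⟨x, hx⟩ := hπsurj q
    obtain ⟨n, hn⟩ := hdec x
    have hπe : π e = 1 := (QuotientGroup.eq_one_iff _).mpr hNe
    have hx' : q = π (x * e ^ (-n)) := by
      rw [map_mul, map_zpow, hπe, one_zpow, mul_one, hx]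
    rw [hx']
    have : Subgroup.map π (commutator E) ≤ commutator (E ⧸ N) := by
      rw [commutator_def, Subgroup.map_commutator, commutator_def]
      exact Subgroup.commutator_mono le_top le_top
    exact this ⟨_, hn, rfl⟩
  -- solvable + perfect implies trivial
  have htriv : ∀ q : E ⧸ N, q = 1 := by
    obtain ⟨m, hm⟩ := hsolvQ
    have hder : ∀ k, derivedSeries (E ⧸ N) k = ⊤ := by
      intro k
      induction k with
      | zero => rfl
      | succ k ih => rw [derivedSeries_succ, ih, ← commutator_def, hperf]
    rw [hder m] at hm
    intro q
    have : q ∈ (⊤ : Subgroup (E ⧸ N)) := trivial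
    rw [hm] at this
    exact this
  -- conclude
  rw [eq_top_iff]
  rintro x -
  exact (QuotientGroup.eq_one_iff _).mp (htriv (π x))
end

section
/- Let p, q, r be positive integers with gcd(p,q,r) = 1, p | q·r, q | p·r, r | p·q, and p odd. Then there exist integers a, b, c with gcd(a,p) = gcd(b,q) = gcd(c,r) = 1, a·q·r + b·p·r + c·p·q = 0, and gcd(a·q − b·p, 2·a·r + c·p, 2·b·r + c·q) = 1. -/
theorem stmt5 (p q r : ℤ) (hp : 0 < p) (hq : 0 < q) (hr : 0 < r)
    (hgcd : Int.gcd p (Int.gcd q r : ℤ) = 1)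
    (hpd : p ∣ q * r) (hqd : q ∣ p * r) (hrd : r ∣ p * q)
    (hodd : Odd p) :
    ∃ a b c : ℤ, Int.gcd a p = 1 ∧ Int.gcd b q = 1 ∧ Int.gcd c r = 1 ∧
      a * q * r + b * p * r + c * p * q = 0 ∧
      Int.gcd (a * q - b * p) (Int.gcd (2 * a * r + c * p) (2 * b * r + c * q) : ℤ) = 1 := by
  set x : ℤ := (Int.gcd q r : ℤ) with hxdef
  set y : ℤ := (Int.gcd p r : ℤ) with hydef
  set z : ℤ := (Int.gcd p q : ℤ) with hzdef
  have hxq : x ∣ q := (Int.gcd_dvd_left _ _)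
  have hxr : x ∣ r := (Int.gcd_dvd_right _ _)
  have hyp : y ∣ p := (Int.gcd_dvd_left _ _)
  have hyr : y ∣ r := (Int.gcd_dvd_right _ _)
  have hzp : z ∣ p := (Int.gcd_dvd_left _ _)
  have hzq : z ∣ q := (Int.gcd_dvd_right _ _)
  -- any common divisor of p, q, r divides 1
  have key : ∀ d : ℤ, d ∣ p → d ∣ q → d ∣ r → d ∣ 1 := by
    intro d hdp hdq hdr
    have h1 : d ∣ (Int.gcd q r : ℤ) := Int.dvd_coe_gcd hdq hdr
    have h2 : d ∣ (Int.gcd p (Int.gcd q r : ℤ) : ℤ) := Int.dvd_coe_gcd hdp h1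
    rw [hgcd] at h2
    exact_mod_cast h2
  have copr : ∀ u v : ℤ, u ∣ p ∨ u ∣ q → u ∣ p ∨ u ∣ r → u ∣ q ∨ u ∣ r →
      True := fun _ _ _ _ _ => trivial
  have hxy : IsCoprime x y := by
    rw [← Int.isCoprime_iff_gcd_eq_one.symm]
    have h := key (Int.gcd x y : ℤ) (dvd_trans (Int.gcd_dvd_right _ _) hyp)
      (dvd_trans (Int.gcd_dvd_left _ _) hxq) (dvd_trans (Int.gcd_dvd_left _ _) hxr)
    exact Nat.dvd_one.mp (by exact_mod_cast h)
  have hxz : IsCoprime x z := by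
    rw [← Int.isCoprime_iff_gcd_eq_one.symm]
    have h := key (Int.gcd x z : ℤ) (dvd_trans (Int.gcd_dvd_right _ _) hzp)
      (dvd_trans (Int.gcd_dvd_left _ _) hxq) (dvd_trans (Int.gcd_dvd_left _ _) hxr)
    exact Nat.dvd_one.mp (by exact_mod_cast h)
  have hyz : IsCoprime y z := by
    rw [← Int.isCoprime_iff_gcd_eq_one.symm]
    have h := key (Int.gcd y z : ℤ) (dvd_trans (Int.gcd_dvd_left _ _) hyp)
      (dvd_trans (Int.gcd_dvd_right _ _) hzq) (dvd_trans (Int.gcd_dvd_left _ _) hyr)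
    exact Nat.dvd_one.mp (by exact_mod_cast h)
  have hx0 : (0:ℤ) ≤ x := Int.natCast_nonneg _
  have hy0 : (0:ℤ) ≤ y := Int.natCast_nonneg _
  have hz0 : (0:ℤ) ≤ z := Int.natCast_nonneg _
  -- p = y * z
  have hpyz : p = y * z := by
    have h1 : ((Int.gcd p (q*r) : ℕ) : ℤ) = p := by
      rw [Int.gcd_eq_natAbs_left hpd, Int.natAbs_of_nonneg hp.le]
    have h2 := gcd_mul_dvd_mul_gcd p q r
    rw [← Int.coe_gcd, ← Int.coe_gcd, ← Int.coe_gcd, h1] at h2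
    refine Int.dvd_antisymm hp.le (mul_nonneg hy0 hz0) ?_ (hyz.mul_dvd hyp hzp)
    rw [mul_comm]
    exact_mod_cast h2
  have hqxz : q = x * z := by
    have h1 : ((Int.gcd q (p*r) : ℕ) : ℤ) = q := by
      rw [Int.gcd_eq_natAbs_left hqd, Int.natAbs_of_nonneg hq.le]
    have h2 := gcd_mul_dvd_mul_gcd q p r
    rw [← Int.coe_gcd, ← Int.coe_gcd, ← Int.coe_gcd, h1] at h2
    have h3 : q ∣ z * x := by
      have : (Int.gcd q p : ℤ) = z := by rw [hzdef]; norm_cast; exact Int.gcd_comm q p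
      rw [this] at h2; exact_mod_cast h2
    refine Int.dvd_antisymm hq.le (mul_nonneg hx0 hz0) ?_ (hxz.mul_dvd hxq hzq)
    rw [mul_comm]; exact h3
  have hrxy : r = x * y := by
    have h1 : ((Int.gcd r (p*q) : ℕ) : ℤ) = r := by
      rw [Int.gcd_eq_natAbs_left hrd, Int.natAbs_of_nonneg hr.le]
    have h2 := gcd_mul_dvd_mul_gcd r p q
    rw [← Int.coe_gcd, ← Int.coe_gcd, ← Int.coe_gcd, h1] at h2
    have h3 : r ∣ y * x := by
      have e1 : (Int.gcd r p : ℤ) = y := by rw [hydef]; norm_cast; exact Int.gcd_comm r p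
      have e2 : (Int.gcd r q : ℤ) = x := by rw [hxdef]; norm_cast; exact Int.gcd_comm r q
      rw [e1, e2] at h2; exact_mod_cast h2
    refine Int.dvd_antisymm hr.le (mul_nonneg hx0 hy0) ?_ (hxy.mul_dvd hxr hyr)
    rw [mul_comm]; exact h3
  -- y and z are odd
  have hoyz : Odd y ∧ Odd z := by
    rw [hpyz] at hodd
    exact Int.odd_mul.mp hodd
  obtain ⟨k, hk⟩ := hoyz.2
  have h2z : IsCoprime (2:ℤ) z := ⟨-k, 1, by rw [hk]; ring⟩
  have h2yz : IsCoprime (2*y) z := h2z.mul_left hyz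
  obtain ⟨m, n, hmn⟩ := hxz
  obtain ⟨s, t, hst⟩ := hxy.symm
  obtain ⟨s', t', hst'⟩ := h2yz
  set b : ℤ := s*n*z + s'*m*x with hbdef
  set a : ℤ := -m - t*n*z + s'*m*y with hadef
  set c : ℤ := n - 2*s*y*n + t'*m*x with hcdef
  have hax : a * x = b * y - 1 := by
    rw [hadef, hbdef]; linear_combination (-1 : ℤ) * hmn - n*z*hst
  have hcz : c * z = 1 - 2*b*y := by
    rw [hcdef, hbdef]; linear_combination hmn + m*x*hst'
  refine ⟨a, b, c, ?_, ?_, ?_, ?_, ?_⟩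
  · rw [Int.isCoprime_iff_gcd_eq_one.symm, hpyz]
    have cay : IsCoprime a y := ⟨-x, b, by linear_combination (-1:ℤ) * hax⟩
    have caz : IsCoprime a z := ⟨-2*x, -c, by linear_combination (-2:ℤ)*hax - hcz⟩
    exact cay.mul_right caz
  · rw [Int.isCoprime_iff_gcd_eq_one.symm, hqxz]
    have cbx : IsCoprime b x := ⟨y, -a, by linear_combination -hax⟩
    have cbz : IsCoprime b z := ⟨2*y, c, by linear_combination hcz⟩
    exact cbx.mul_right cbz
  · rw [Int.isCoprime_iff_gcd_eq_one.symm, hrxy]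
    have ccx : IsCoprime c x := ⟨-z, -2*a, by linear_combination -hcz - 2*hax⟩
    have ccy : IsCoprime c y := ⟨z, 2*b, by linear_combination hcz⟩
    exact ccx.mul_right ccy
  · rw [hpyz, hqxz, hrxy]
    linear_combination x*y*z*hax + x*y*z*hcz
  · have e1 : a*q - b*p = -z := by rw [hqxz, hpyz]; linear_combination z*hax
    have e2 : 2*a*r + c*p = -y := by rw [hrxy, hpyz]; linear_combination 2*y*hax + y*hcz
    have e3 : 2*b*r + c*q = x := by rw [hrxy, hqxz]; linear_combination x*hcz
    rw [e1, e2, e3]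
    have hinner : Int.gcd (-y) x = 1 := Int.isCoprime_iff_gcd_eq_one.symm.mpr (hxy.symm.neg_left)
    rw [hinner]
    have : IsCoprime (-z) ((1:ℕ) : ℤ) := isCoprime_one_right
    exact Int.isCoprime_iff_gcd_eq_one.symm.mpr this
end

section
/- Let p, q, r, s be positive integers with gcd(p,q) = 1 and gcd(r,s) = 1, and suppose there exist integers a, b, c, d with gcd(a,p) = gcd(b,q) = gcd(c,r) = gcd(d,s) = 1 and a·q·r·s + b·p·r·s + c·p·q·s + d·p·q·r = 0, and gcd(pq, pr, ps, qr, qs, rs) = 1. Then there exist positive integers p_r, p_s, q_r, q_s and signs ε_r, ε_s ∈ {1,−1} with p = p_r·p_s, q = q_r·q_s, r = ε_r·p_r·q_r, and s = ε_s·p_s·q_s. -/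
lemma split_dvd {x n m : ℕ} (hcop : Nat.Coprime n m) (h : x ∣ n * m) :
    Nat.gcd x n * Nat.gcd x m = x :=
  (Nat.gcd_mul_gcd_eq_iff_dvd_mul_of_coprime hcop).mpr h

theorem stmt7 (p q r s : ℤ) (hp : 0 < p) (hq : 0 < q) (hr : 0 < r) (hs : 0 < s)
    (hpq : Int.gcd p q = 1) (hrs : Int.gcd r s = 1)
    (a b c d : ℤ)
    (hap : Int.gcd a p = 1) (hbq : Int.gcd b q = 1)
    (hcr : Int.gcd c r = 1) (hds : Int.gcd d s = 1)
    (h0 : a * q * r * s + b * p * r * s + c * p * q * s + d * p * q * r = 0)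
    (hE1 : Int.gcd (p * q) (Int.gcd (p * r) (Int.gcd (p * s)
      (Int.gcd (q * r) (Int.gcd (q * s) (r * s) : ℤ) : ℤ) : ℤ) : ℤ) = 1) :
    ∃ (pr ps qr qs εr εs : ℤ), 0 < pr ∧ 0 < ps ∧ 0 < qr ∧ 0 < qs ∧
      (εr = 1 ∨ εr = -1) ∧ (εs = 1 ∨ εs = -1) ∧
      p = pr * ps ∧ q = qr * qs ∧ r = εr * (pr * qr) ∧ s = εs * (ps * qs) := by
  have cap : IsCoprime a p := Int.isCoprime_iff_gcd_eq_one.mpr hap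
  have cbq : IsCoprime b q := Int.isCoprime_iff_gcd_eq_one.mpr hbq
  have ccr : IsCoprime c r := Int.isCoprime_iff_gcd_eq_one.mpr hcr
  have cds : IsCoprime d s := Int.isCoprime_iff_gcd_eq_one.mpr hds
  have cpq : IsCoprime p q := Int.isCoprime_iff_gcd_eq_one.mpr hpq
  have crs : IsCoprime r s := Int.isCoprime_iff_gcd_eq_one.mpr hrs
  have hprs : p ∣ r * s := by
    have h1 : p ∣ (a * q) * (r * s) :=
      ⟨-(b * r * s + c * q * s + d * q * r), by linear_combination h0⟩
    exact (cap.symm.mul_right cpq).dvd_of_dvd_mul_left h1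
  have hqrs : q ∣ r * s := by
    have h1 : q ∣ (b * p) * (r * s) :=
      ⟨-(a * r * s + c * p * s + d * p * r), by linear_combination h0⟩
    exact (cbq.symm.mul_right cpq.symm).dvd_of_dvd_mul_left h1
  have hrpq : r ∣ p * q := by
    have h1 : r ∣ (c * s) * (p * q) :=
      ⟨-(a * q * s + b * p * s + d * p * q), by linear_combination h0⟩
    exact (ccr.symm.mul_right crs).dvd_of_dvd_mul_left h1
  have hspq : s ∣ p * q := by
    have h1 : s ∣ (d * r) * (p * q) :=
      ⟨-(a * q * r + b * p * r + c * p * q), by linear_combination h0⟩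
    exact (cds.symm.mul_right crs.symm).dvd_of_dvd_mul_left h1
  -- pass to natAbs
  set P := p.natAbs; set Q := q.natAbs; set R := r.natAbs; set S := s.natAbs
  have hPQ : Nat.Coprime P Q := hpq
  have hRS : Nat.Coprime R S := hrs
  have hP : P ∣ R * S := by
    rw [← Int.natAbs_mul]; exact Int.natAbs_dvd_natAbs.mpr hprs
  have hQ : Q ∣ R * S := by
    rw [← Int.natAbs_mul]; exact Int.natAbs_dvd_natAbs.mpr hqrs
  have hR : R ∣ P * Q := by
    rw [← Int.natAbs_mul]; exact Int.natAbs_dvd_natAbs.mpr hrpq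
  have hS : S ∣ P * Q := by
    rw [← Int.natAbs_mul]; exact Int.natAbs_dvd_natAbs.mpr hspq
  have eP : Nat.gcd P R * Nat.gcd P S = P := split_dvd hRS hP
  have eQ : Nat.gcd Q R * Nat.gcd Q S = Q := split_dvd hRS hQ
  have eR : Nat.gcd R P * Nat.gcd R Q = R := split_dvd hPQ hR
  have eS : Nat.gcd S P * Nat.gcd S Q = S := split_dvd hPQ hS
  have hp' : p = (P : ℤ) := (Int.natAbs_of_nonneg hp.le).symm
  have hq' : q = (Q : ℤ) := (Int.natAbs_of_nonneg hq.le).symm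
  have hr' : r = (R : ℤ) := (Int.natAbs_of_nonneg hr.le).symm
  have hs' : s = (S : ℤ) := (Int.natAbs_of_nonneg hs.le).symm
  refine ⟨(Nat.gcd P R : ℤ), (Nat.gcd P S : ℤ), (Nat.gcd Q R : ℤ), (Nat.gcd Q S : ℤ), 1, 1,
    ?_, ?_, ?_, ?_, Or.inl rfl, Or.inl rfl, ?_, ?_, ?_, ?_⟩
  · have : Nat.gcd P R ≠ 0 := by
      intro h; rw [h, zero_mul] at eP
      exact absurd (hp' ▸ hp) (by rw [← eP]; simp)
    exact_mod_cast Nat.pos_of_ne_zero this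
  · have : Nat.gcd P S ≠ 0 := by
      intro h; rw [h, mul_zero] at eP
      exact absurd (hp' ▸ hp) (by rw [← eP]; simp)
    exact_mod_cast Nat.pos_of_ne_zero this
  · have : Nat.gcd Q R ≠ 0 := by
      intro h; rw [h, zero_mul] at eQ
      exact absurd (hq' ▸ hq) (by rw [← eQ]; simp)
    exact_mod_cast Nat.pos_of_ne_zero this
  · have : Nat.gcd Q S ≠ 0 := by
      intro h; rw [h, mul_zero] at eQ
      exact absurd (hq' ▸ hq) (by rw [← eQ]; simp)
    exact_mod_cast Nat.pos_of_ne_zero this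
  · rw [hp']; exact_mod_cast eP.symm
  · rw [hq']; exact_mod_cast eQ.symm
  · rw [hr', one_mul, Nat.gcd_comm P R, Nat.gcd_comm Q R]; exact_mod_cast eR.symm
  · rw [hs', one_mul, Nat.gcd_comm P S, Nat.gcd_comm Q S]; exact_mod_cast eS.symm
end

section
/- Let G be the group with presentation ⟨t, u, v, w ∣ u^a = t^e, v^b = t^f, w^2 = t, w·u·v = u·v·w, t central⟩ with a, b odd, gcd(a,b) = 1, and 2·(a·f − b·e) + a·b = ±1. Then the quotient of G by the normal closure of u⁻¹·w·v is trivial; i.e., u⁻¹wv is a weight element for G. -/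
private lemma keyLemma {Q : Type*} [Group Q] (a b e f : ℤ) (hbodd : Odd b)
    (hab : IsCoprime a b)
    (hunit : 2 * (a * f - b * e) + a * b = 1 ∨ 2 * (a * f - b * e) + a * b = -1)
    (T U V W : Q)
    (hU : U ^ a = T ^ e) (hV : V ^ b = T ^ f) (hW : W ^ (2 : ℤ) = T)
    (hc : W * U * V = U * V * W)
    (hT2 : Commute T V) (hT3 : Commute T W)
    (hr : U⁻¹ * W * V = 1) :
    T = 1 ∧ U = 1 ∧ V = 1 ∧ W = 1 := by
  have hu : U = W * V := by
    have h1 : U⁻¹ * (W * V) = 1 := by rw [← mul_assoc]; exact hr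
    exact (inv_mul_eq_one.mp h1)
  -- W commutes with V*V
  have cWVV : Commute W (V * V) := by
    have h1 : W * (W * (V * V)) = W * (V * V * W) := by
      have := hc
      rw [hu] at this
      group at this ⊢
      exact this
    exact (mul_left_cancel h1)
  -- W commutes with V, using b odd
  obtain ⟨k, hk⟩ := hbodd
  have hVrw : V = (V * V) ^ (-k) * T ^ f := by
    have h2 : (V * V : Q) = V ^ (2 : ℤ) := by
      rw [zpow_two]
    have h3 : 2 * (-k) + b = 1 := by rw [hk]; ring
    rw [h2, ← zpow_mul, ← hV, ← zpow_add, h3, zpow_one]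
  have cWV : Commute W V := by
    rw [hVrw]
    exact (cWVV.zpow_right (-k)).mul_right ((hT3.symm).zpow_right f)
  -- key exponent relation
  have hVa : V ^ a = W ^ (2 * e - a) := by
    have h2 : W ^ a * V ^ a = W ^ (2 * e) := by
      rw [← cWV.mul_zpow, ← hu, hU, ← hW, ← zpow_mul]
    calc V ^ a = W ^ (-a) * (W ^ a * V ^ a) := by
          rw [← mul_assoc, ← zpow_add]; simp
      _ = W ^ (-a) * W ^ (2 * e) := by rw [h2]
      _ = W ^ (2 * e - a) := by rw [← zpow_add]; ring_nf
  have hVb : V ^ b = W ^ (2 * f) := by rw [hV, ← hW, ← zpow_mul]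
  have keyWV : ∀ p q : ℤ, W ^ ((2 * e - a) * p + 2 * f * q) = V ^ (a * p + b * q) := by
    intro p q
    rw [zpow_add, zpow_mul, zpow_mul, ← hVa, ← hVb, ← zpow_mul, ← zpow_mul, ← zpow_add]
  have hW1 : W = 1 := by
    rcases hunit with hD | hD
    · have h1 : (2 * e - a) * (-b) + 2 * f * a = 1 := by linear_combination hD
      have h2 : a * (-b) + b * a = 0 := by ring
      have := keyWV (-b) a
      rw [h1, h2] at this
      simpa using this
    · have h1 : (2 * e - a) * b + 2 * f * (-a) = 1 := by linear_combination -hD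
      have h2 : a * b + b * (-a) = 0 := by ring
      have := keyWV b (-a)
      rw [h1, h2] at this
      simpa using this
  have hVa1 : V ^ a = 1 := by rw [hVa, hW1, one_zpow]
  have hVb1 : V ^ b = 1 := by rw [hVb, hW1, one_zpow]
  obtain ⟨x, y, hxy⟩ := hab
  have hV1 : V = 1 := by
    have : V = V ^ (x * a + y * b) := by rw [hxy, zpow_one]
    rw [mul_comm x a, mul_comm y b, zpow_add, zpow_mul, zpow_mul, hVa1, hVb1] at this
    simpa using this
  have hU1 : U = 1 := by rw [hu, hW1, hV1, one_mul]
  have hT1 : T = 1 := by rw [← hW, hW1, one_zpow]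
  exact ⟨hT1, hU1, hV1, hW1⟩

open FreeGroup commutatorElement in
/-- Relators for ⟨t,u,v,w ∣ u^a = t^e, v^b = t^f, w^2 = t, wuv = uvw, t central⟩,
with generators indexed as 0 = t, 1 = u, 2 = v, 3 = w. -/
def dABRels (a b e f : ℤ) : Set (FreeGroup (Fin 4)) :=
  { of 1 ^ a * (of 0 ^ e)⁻¹, of 2 ^ b * (of 0 ^ f)⁻¹, of 3 ^ (2 : ℤ) * (of 0)⁻¹,
    of 3 * of 1 * of 2 * (of 1 * of 2 * of 3)⁻¹,
    ⁅(of 0 : FreeGroup (Fin 4)), of 1⁆, ⁅(of 0 : FreeGroup (Fin 4)), of 2⁆,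
    ⁅(of 0 : FreeGroup (Fin 4)), of 3⁆ }

theorem stmt14 (a b e f : ℤ) (haodd : Odd a) (hbodd : Odd b)
    (hab : Int.gcd a b = 1)
    (hunit : 2 * (a * f - b * e) + a * b = 1 ∨ 2 * (a * f - b * e) + a * b = -1) :
    Subgroup.normalClosure
        ({(PresentedGroup.of 1 : PresentedGroup (dABRels a b e f))⁻¹ *
          PresentedGroup.of 3 * PresentedGroup.of 2} :
          Set (PresentedGroup (dABRels a b e f))) = ⊤ := by
  set rels := dABRels a b e f with hrels
  set G := PresentedGroup rels
  set N : Subgroup G := Subgroup.normalClosure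
      ({(PresentedGroup.of 1 : G)⁻¹ * PresentedGroup.of 3 * PresentedGroup.of 2} : Set G)
    with hN
  have hNnormal : N.Normal := Subgroup.normalClosure_normal
  -- the composite hom from the free group to the quotient
  let φ : FreeGroup (Fin 4) →* G ⧸ N := (QuotientGroup.mk' N).comp (PresentedGroup.mk rels)
  -- every relator maps to 1 under φ
  have hrel : ∀ r ∈ rels, φ r = 1 := by
    intro r hr
    have h1 : PresentedGroup.mk rels r = 1 := by
      have : r ∈ Subgroup.normalClosure rels := Subgroup.subset_normalClosure hr
      exact (QuotientGroup.eq_one_iff r).mpr this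
    simp [φ, h1]
  set T := φ (FreeGroup.of 0) with hT
  set U := φ (FreeGroup.of 1) with hU
  set V := φ (FreeGroup.of 2) with hV
  set W := φ (FreeGroup.of 3) with hW
  have h1 : U ^ a = T ^ e := by
    have := hrel _ (show FreeGroup.of 1 ^ a * (FreeGroup.of 0 ^ e)⁻¹ ∈ rels by
      rw [hrels]; left; rfl)
    rw [map_mul, map_inv, map_zpow, map_zpow, mul_inv_eq_one] at this
    exact this
  have h2 : V ^ b = T ^ f := by
    have := hrel _ (show FreeGroup.of 2 ^ b * (FreeGroup.of 0 ^ f)⁻¹ ∈ rels by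
      rw [hrels]; right; left; rfl)
    rw [map_mul, map_inv, map_zpow, map_zpow, mul_inv_eq_one] at this
    exact this
  have h3 : W ^ (2 : ℤ) = T := by
    have := hrel _ (show FreeGroup.of 3 ^ (2 : ℤ) * (FreeGroup.of 0)⁻¹ ∈ rels by
      rw [hrels]; right; right; left; rfl)
    rw [map_mul, map_inv, map_zpow, mul_inv_eq_one] at this
    exact this
  have h4 : W * U * V = U * V * W := by
    have := hrel _ (show FreeGroup.of 3 * FreeGroup.of 1 * FreeGroup.of 2 *
        (FreeGroup.of 1 * FreeGroup.of 2 * FreeGroup.of 3)⁻¹ ∈ rels by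
      rw [hrels]; right; right; right; left; rfl)
    rw [map_mul, map_inv, map_mul, map_mul, map_mul, map_mul, mul_inv_eq_one] at this
    exact this
  have h6 : Commute T V := by
    open commutatorElement in have := hrel _ (show ⁅(FreeGroup.of 0 : FreeGroup (Fin 4)), FreeGroup.of 2⁆ ∈ rels by
      rw [hrels]; right; right; right; right; right; left; rfl)
    rw [map_commutatorElement] at this
    exact commutatorElement_eq_one_iff_commute.mp this
  have h7 : Commute T W := by
    open commutatorElement in have := hrel _ (show ⁅(FreeGroup.of 0 : FreeGroup (Fin 4)), FreeGroup.of 3⁆ ∈ rels by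
      rw [hrels]; right; right; right; right; right; right; rfl)
    rw [map_commutatorElement] at this
    exact commutatorElement_eq_one_iff_commute.mp this
  have hr : U⁻¹ * W * V = 1 := by
    have hmem : (PresentedGroup.of 1 : G)⁻¹ * PresentedGroup.of 3 * PresentedGroup.of 2 ∈ N :=
      Subgroup.subset_normalClosure rfl
    have := (QuotientGroup.eq_one_iff _).mpr hmem
    simp [φ, hT, hU, hV, hW, map_mul, map_inv]; exact this
  have habc : IsCoprime a b := Int.isCoprime_iff_gcd_eq_one.mpr hab
  obtain ⟨hT1, hU1, hV1, hW1⟩ := keyLemma a b e f hbodd habc hunit T U V W h1 h2 h3 h4 h6 h7 hr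
  -- conclude φ is trivial, hence N = ⊤
  have hφ : φ = 1 := by
    apply FreeGroup.ext_hom
    intro i
    fin_cases i
    · exact hT1
    · exact hU1
    · exact hV1
    · exact hW1
  have : ∀ g : G, g ∈ N := by
    intro g
    obtain ⟨x, rfl⟩ := PresentedGroup.mk_surjective rels g
    have : φ x = 1 := by rw [hφ]; rfl
    exact (QuotientGroup.eq_one_iff _).mp this
  exact (Subgroup.eq_top_iff' N).mpr this
end
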